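/- Let n be an even positive integer and G = ℤ/n with Lee distance δ(g,0) = min(g mod n, n − (g mod n)). The function λ(j) = ∑_{g=1}^{n−1} δ(g,0)^{−1} e^{2πijg/n}, for j ∈ {0,…,n−1}, attains its unique minimum at j = n/2. -/

import Mathlib

open Real Finset

lemma Qs_identity' (k : ℕ) (x : ℝ) :
    2 * Real.cos (x/2) * ((∑ d ∈ Finset.range k, (-1:ℝ)^d * Real.sin (((d:ℝ)+1)*x))
      + (-1:ℝ)^k/2 * Real.sin (((k:ℝ)+1)*x))
    = Real.sin (x/2) * (1 - (-1:ℝ)^(k+1) * Real.cos (((k:ℝ)+1)*x)) := by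
  have pyth0 := Real.sin_sq_add_cos_sq (x/2)
  have h1 : Real.sin x = 2 * Real.sin (x/2) * Real.cos (x/2) := by
    have := Real.sin_two_mul (x/2); rw [show 2*(x/2) = x by ring] at this; linarith
  have h2 : Real.cos x = 1 - 2 * Real.sin (x/2)^2 := by
    have := Real.cos_two_mul' (x/2); rw [show 2*(x/2) = x by ring] at this
    linear_combination this + pyth0
  have pyth := Real.sin_sq_add_cos_sq (x/2)
  induction k with
  | zero =>
    simp only [Finset.range_zero, Finset.sum_empty, zero_add, pow_zero, pow_one,
      Nat.cast_zero]
    rw [show ((1:ℝ))*x = x from one_mul x, h1, h2]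
    linear_combination 2*Real.sin (x/2) * pyth
  | succ k ih =>
    rw [Finset.sum_range_succ]
    have hsin : Real.sin (((k:ℝ)+1+1)*x) = Real.sin (((k:ℝ)+1)*x) * Real.cos x
        + Real.cos (((k:ℝ)+1)*x) * Real.sin x := by
      rw [show ((k:ℝ)+1+1)*x = ((k:ℝ)+1)*x + x by ring, Real.sin_add]
    have hcos : Real.cos (((k:ℝ)+1+1)*x) = Real.cos (((k:ℝ)+1)*x) * Real.cos x
        - Real.sin (((k:ℝ)+1)*x) * Real.sin x := by
      rw [show ((k:ℝ)+1+1)*x = ((k:ℝ)+1)*x + x by ring, Real.cos_add]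
    push_cast
    rw [hsin, hcos, h1, h2]
    push_cast at ih
    linear_combination ih - 2*(-1:ℝ)^k*Real.sin (x/2)*Real.cos (((k:ℝ)+1)*x) * pyth

noncomputable def Qs (m : ℕ) (x : ℝ) : ℝ :=
  (∑ d ∈ Finset.range (m-1), (-1:ℝ)^d * Real.sin (((d:ℝ)+1)*x))
    + (-1:ℝ)^(m-1)/2 * Real.sin ((m:ℝ)*x)

lemma Qs_identity (m : ℕ) (hm : 1 ≤ m) (x : ℝ) :
    2 * Real.cos (x/2) * Qs m x
      = Real.sin (x/2) * (1 - (-1:ℝ)^m * Real.cos ((m:ℝ)*x)) := by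
  obtain ⟨k, rfl⟩ := Nat.exists_eq_add_of_le hm
  have := Qs_identity' k x
  simpa [Qs, Nat.add_sub_cancel_left, add_comm 1 k, add_comm (k:ℝ) 1] using this

lemma Qs_nonneg (m : ℕ) (hm : 1 ≤ m) {x : ℝ} (hx0 : 0 < x) (hxpi : x < Real.pi) :
    0 ≤ Qs m x := by
  have hc : 0 < Real.cos (x/2) := by
    apply Real.cos_pos_of_mem_Ioo
    constructor <;> [linarith [Real.pi_pos]; linarith]
  have hs : 0 ≤ Real.sin (x/2) := by
    apply Real.sin_nonneg_of_nonneg_of_le_pi <;> linarith [Real.pi_pos]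
  have hb : (-1:ℝ)^m * Real.cos ((m:ℝ)*x) ≤ 1 := by
    calc (-1:ℝ)^m * Real.cos ((m:ℝ)*x) ≤ |(-1:ℝ)^m * Real.cos ((m:ℝ)*x)| := le_abs_self _
    _ = |Real.cos ((m:ℝ)*x)| := by rw [abs_mul, abs_pow, abs_neg, abs_one, one_pow, one_mul]
    _ ≤ 1 := Real.abs_cos_le_one _
  have := Qs_identity m hm x
  nlinarith [mul_nonneg hs (sub_nonneg.mpr hb)]

lemma Qs_pos (m : ℕ) (hm : 1 ≤ m) {x : ℝ} (hx0 : 0 < x) (hxm : (m:ℝ)*x < Real.pi) :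
    0 < Qs m x := by
  have hmpos : (0:ℝ) < m := by exact_mod_cast hm
  have hxpi : x < Real.pi := by
    calc x = 1*x := (one_mul x).symm
    _ ≤ (m:ℝ)*x := by apply mul_le_mul_of_nonneg_right _ hx0.le; exact_mod_cast hm
    _ < Real.pi := hxm
  have hc : 0 < Real.cos (x/2) := by
    apply Real.cos_pos_of_mem_Ioo
    constructor <;> [linarith [Real.pi_pos]; linarith]
  have hs : 0 < Real.sin (x/2) := by
    apply Real.sin_pos_of_pos_of_lt_pi <;> linarith [Real.pi_pos]
  have hmx0 : 0 < (m:ℝ)*x := by positivity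
  have hb : (-1:ℝ)^m * Real.cos ((m:ℝ)*x) < 1 := by
    rcases Nat.even_or_odd m with he | ho
    · rw [he.neg_one_pow, one_mul]
      have : Real.cos ((m:ℝ)*x) ≠ 1 := by
        intro h
        have h2pi : -(2*Real.pi) < (m:ℝ)*x := by linarith [Real.pi_pos]
        have h2pi' : (m:ℝ)*x < 2*Real.pi := by linarith [Real.pi_pos]
        have := (Real.cos_eq_one_iff_of_lt_of_lt h2pi h2pi').mp h
        linarith
      exact lt_of_le_of_ne (Real.cos_le_one _) this
    · rw [ho.neg_one_pow, neg_mul, one_mul, neg_lt]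
      have : -1 < Real.cos ((m:ℝ)*x) := by
        have hne : Real.cos ((m:ℝ)*x) ≠ -1 := by
          intro h
          obtain ⟨k, hk⟩ := Real.cos_eq_neg_one_iff.mp h
          have hppos := Real.pi_pos
          have hkneg : (k:ℝ) < 0 := by nlinarith
          have hkneg' : k < 0 := by exact_mod_cast hkneg
          have hkle : (k:ℝ) ≤ -1 := by exact_mod_cast Int.le_sub_one_of_lt hkneg'
          nlinarith
        exact lt_of_le_of_ne (Real.neg_one_le_cos _) (Ne.symm hne)
      linarith
  have := Qs_identity m hm x
  nlinarith [mul_pos hs (sub_pos.mpr hb)]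

noncomputable def Pt (m : ℕ) (x : ℝ) : ℝ :=
  (∑ d ∈ Finset.range (m-1), (-1:ℝ)^d / ((d:ℝ)+1) * (1 - Real.cos (((d:ℝ)+1)*x)))
    + (-1:ℝ)^(m-1)/(2*(m:ℝ)) * (1 - Real.cos ((m:ℝ)*x))

lemma Pt_hasDerivAt (m : ℕ) (hm : 1 ≤ m) (x : ℝ) : HasDerivAt (Pt m) (Qs m x) x := by
  have hmne : ((m:ℝ)) ≠ 0 := by positivity
  have hterm : ∀ a : ℝ, HasDerivAt (fun y => 1 - Real.cos (a*y)) (a * Real.sin (a*x)) x := by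
    intro a
    have h1 : HasDerivAt (fun y : ℝ => a*y) a x := by
      simpa using (hasDerivAt_id x).const_mul a
    have := h1.cos
    have h2 := (hasDerivAt_const x (1:ℝ)).sub this
    exact h2.congr_deriv (by ring)
  have hsum : HasDerivAt (fun y => ∑ d ∈ Finset.range (m-1),
      (-1:ℝ)^d / ((d:ℝ)+1) * (1 - Real.cos (((d:ℝ)+1)*y)))
      (∑ d ∈ Finset.range (m-1), (-1:ℝ)^d * Real.sin (((d:ℝ)+1)*x)) x := by
    have := HasDerivAt.fun_sum (fun d _hd => ((hterm ((d:ℝ)+1)).const_mul ((-1:ℝ)^d / ((d:ℝ)+1)))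
      : ∀ d ∈ Finset.range (m-1), HasDerivAt _ _ x)
    apply this.congr_deriv
    apply Finset.sum_congr rfl
    intro d _
    have : ((d:ℝ)+1) ≠ 0 := by positivity
    field_simp
  have hlast := (hterm (m:ℝ)).const_mul ((-1:ℝ)^(m-1)/(2*(m:ℝ)))
  have := hsum.fun_add hlast
  apply this.congr_deriv
  unfold Qs
  congr 1
  field_simp

lemma Pt_zero (m : ℕ) : Pt m 0 = 0 := by
  simp [Pt]

lemma Pt_pos (m : ℕ) (hm : 1 ≤ m) {x : ℝ} (hx0 : 0 < x) (hxpi : x ≤ Real.pi) :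
    0 < Pt m x := by
  have hppos := Real.pi_pos
  have hmpos : (0:ℝ) < m := by exact_mod_cast hm
  have hcont : Continuous (Pt m) := by
    have : Differentiable ℝ (Pt m) := fun y => (Pt_hasDerivAt m hm y).differentiableAt
    exact this.continuous
  have hderiv : ∀ y, deriv (Pt m) y = Qs m y := fun y => (Pt_hasDerivAt m hm y).deriv
  -- strict monotonicity on [0, π/m]
  have hsm : StrictMonoOn (Pt m) (Set.Icc 0 (Real.pi/(m:ℝ))) := by
    apply strictMonoOn_of_deriv_pos (convex_Icc _ _) hcont.continuousOn
    intro y hy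
    rw [interior_Icc] at hy
    rw [hderiv]
    exact Qs_pos m hm hy.1 (by rw [mul_comm]; exact (lt_div_iff₀ hmpos).mp hy.2)
  -- monotonicity on [0, π]
  have hmono : MonotoneOn (Pt m) (Set.Icc 0 Real.pi) := by
    apply monotoneOn_of_deriv_nonneg (convex_Icc _ _) hcont.continuousOn
    · intro y _; exact ((Pt_hasDerivAt m hm y).differentiableAt).differentiableWithinAt
    · intro y hy
      rw [interior_Icc] at hy
      rw [hderiv]
      exact Qs_nonneg m hm hy.1 hy.2
  set b := min x (Real.pi/(m:ℝ)) with hb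
  have hbpos : 0 < b := lt_min hx0 (by positivity)
  have hble : b ≤ Real.pi/(m:ℝ) := min_le_right _ _
  have hbx : b ≤ x := min_le_left _ _
  have h1 : Pt m 0 < Pt m b := by
    apply hsm (Set.left_mem_Icc.mpr (by positivity)) ⟨hbpos.le, hble⟩ hbpos
  have hdm : Real.pi/(m:ℝ) ≤ Real.pi := by
    rw [div_le_iff₀ hmpos]
    have : (1:ℝ) ≤ (m:ℝ) := by exact_mod_cast hm
    nlinarith
  have h2 : Pt m b ≤ Pt m x := by
    apply hmono ⟨hbpos.le, hble.trans hdm⟩ ⟨hx0.le, hxpi⟩ hbx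
  rw [Pt_zero] at h1
  linarith

lemma Pt_symm (m : ℕ) (x : ℝ) : Pt m (2*Real.pi - x) = Pt m x := by
  unfold Pt
  congr 1
  · apply Finset.sum_congr rfl
    intro d _
    congr 2
    rw [show ((d:ℝ)+1)*(2*Real.pi - x) = (d+1) * (2*Real.pi) - ((d:ℝ)+1)*x by ring]
    exact_mod_cast Real.cos_nat_mul_two_pi_sub (((d:ℝ)+1)*x) (d+1)
  · congr 2
    rw [show ((m:ℝ))*(2*Real.pi - x) = m * (2*Real.pi) - (m:ℝ)*x by ring]
    exact Real.cos_nat_mul_two_pi_sub ((m:ℝ)*x) m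

lemma Pt_pos' (m : ℕ) (hm : 1 ≤ m) {x : ℝ} (hx0 : 0 < x) (hx2 : x < 2*Real.pi) :
    0 < Pt m x := by
  rcases le_or_gt x Real.pi with h | h
  · exact Pt_pos m hm hx0 h
  · rw [← Pt_symm]
    exact Pt_pos m hm (by linarith) (by linarith)

lemma key_sum (n m : ℕ) (hn2 : n = 2*m) (hm1 : 1 ≤ m) (x : ℝ)
    (hsym : ∀ h : ℕ, h ≤ n → Real.cos (((n-h:ℕ):ℝ)*x) = Real.cos ((h:ℝ)*x)) :
    ∑ g ∈ Finset.Icc 1 (n-1),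
      (-(-1:ℝ)^g) * (((min g (n-g) : ℕ) : ℝ)⁻¹ * (1 - Real.cos ((g:ℝ)*x))) = 2 * Pt m x := by
  set F : ℕ → ℝ := fun g =>
    (-(-1:ℝ)^g) * (((min g (n-g) : ℕ) : ℝ)⁻¹ * (1 - Real.cos ((g:ℝ)*x))) with hFdef
  have hpow : ∀ a : ℕ, a ≤ n → (-1:ℝ)^(n-a) = (-1)^a := by
    intro a ha
    have h1 : (-1:ℝ)^(n-a) * (-1)^a = 1 := by
      rw [← pow_add, show n - a + a = 2*m by omega]
      exact (even_two_mul m).neg_one_pow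
    have h2 : (-1:ℝ)^a * (-1)^a = 1 := by
      rw [← pow_add]
      exact Even.neg_one_pow ⟨a, rfl⟩
    linear_combination ((-1:ℝ)^a) * h1 - ((-1:ℝ)^(n-a)) * h2
  have hFsymm : ∀ a : ℕ, m < a → a ≤ n-1 → F a = F (n - a) := by
    intro a ham han
    have ha : a ≤ n := by omega
    simp only [hFdef]
    rw [Nat.sub_sub_self ha, min_comm (n-a) a, hpow a ha, hsym a ha]
  have e1 : ∑ g ∈ Finset.Icc 1 (n-1), F g
      = (∑ g ∈ Finset.Icc 1 m, F g) + ∑ g ∈ Finset.Ioc m (n-1), F g := by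
    rw [show Finset.Icc 1 (n-1) = Finset.Ioc 0 (n-1) from Finset.Icc_succ_left_eq_Ioc 0 (n-1),
        show Finset.Icc 1 m = Finset.Ioc 0 m from Finset.Icc_succ_left_eq_Ioc 0 m]
    exact (Finset.sum_Ioc_consecutive F (Nat.zero_le m) (by omega)).symm
  have e2 : ∑ g ∈ Finset.Icc 1 m, F g = (∑ g ∈ Finset.Icc 1 (m-1), F g) + F m := by
    have h := Finset.sum_Icc_succ_top (a := 1) (b := m-1) (by omega) F
    rw [show m-1+1 = m by omega] at h
    exact h
  have e3 : ∑ g ∈ Finset.Ioc m (n-1), F g = ∑ h ∈ Finset.Icc 1 (m-1), F h := by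
    apply Finset.sum_nbij' (i := fun g => n - g) (j := fun h => n - h)
    · intro a ha
      rw [Finset.mem_Ioc] at ha
      rw [Finset.mem_Icc]
      omega
    · intro a ha
      rw [Finset.mem_Icc] at ha
      rw [Finset.mem_Ioc]
      omega
    · intro a ha
      rw [Finset.mem_Ioc] at ha
      omega
    · intro a ha
      rw [Finset.mem_Icc] at ha
      omega
    · intro a ha
      rw [Finset.mem_Ioc] at ha
      exact hFsymm a ha.1 ha.2
  have e4 : ∑ g ∈ Finset.Icc 1 (m-1), F g = ∑ d ∈ Finset.range (m-1), F (1+d) := by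
    rw [show Finset.Icc 1 (m-1) = Finset.Ico 1 m by
      rw [← Finset.Ico_add_one_right_eq_Icc, show m-1+1 = m by omega]]
    rw [Finset.sum_Ico_eq_sum_range]
  have hterm' : ∀ d ∈ Finset.range (m-1),
      F (1+d) = (-1:ℝ)^d/((d:ℝ)+1) * (1 - Real.cos (((d:ℝ)+1)*x)) := by
    intro d hd
    rw [Finset.mem_range] at hd
    simp only [hFdef]
    rw [min_eq_left (by omega : 1+d ≤ n-(1+d))]
    rw [show ((1+d:ℕ):ℝ) = (d:ℝ)+1 by push_cast; ring]
    rw [pow_add, pow_one]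
    field_simp
  have hlast : F m = (-1:ℝ)^(m-1)/(m:ℝ) * (1 - Real.cos ((m:ℝ)*x)) := by
    simp only [hFdef]
    rw [show n - m = m by omega, min_self]
    rw [show m = (m-1)+1 by omega, pow_succ]
    rw [show (m-1)+1 = m by omega]
    field_simp
  rw [e1, e2, e3, e4, Finset.sum_congr rfl hterm', hlast]
  unfold Pt
  have hm0 : ((m:ℝ)) ≠ 0 := by positivity
  generalize (∑ d ∈ Finset.range (m-1), (-1:ℝ)^d / ((d:ℝ)+1) * (1 - Real.cos (((d:ℝ)+1)*x))) = S
  field_simp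
  ring

open Complex in
theorem cycle_eigenvalue_unique_min (n : ℕ) (hn : 0 < n) (heven : Even n) :
    let lam : ℕ → ℂ := fun j => ∑ g ∈ Finset.Icc 1 (n - 1),
      (((min g (n - g) : ℕ) : ℂ))⁻¹ * Complex.exp (2 * Real.pi * Complex.I * j * g / n)
    (∀ j < n, (lam j).im = 0) ∧
      (∀ j < n, j ≠ n / 2 → (lam (n / 2)).re < (lam j).re) := by
  intro lam
  obtain ⟨m, hm2⟩ := heven
  have hn2 : n = 2*m := by omega
  have hm1 : 1 ≤ m := by omega
  have hnd2 : n/2 = m := by omega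
  have hn0 : (n:ℝ) ≠ 0 := by positivity
  have hnm : (n:ℝ) = 2*(m:ℝ) := by exact_mod_cast congrArg (Nat.cast (R:=ℝ)) hn2
  have hlam : ∀ j, lam j = ∑ g ∈ Finset.Icc 1 (n - 1),
      (((min g (n - g) : ℕ) : ℂ))⁻¹ * Complex.exp (2 * Real.pi * Complex.I * j * g / n) :=
    fun j => rfl
  have hterm : ∀ j g : ℕ, (((min g (n - g) : ℕ) : ℂ))⁻¹
      * Complex.exp (2 * Real.pi * Complex.I * j * g / n)
      = (((((min g (n-g) : ℕ) : ℝ))⁻¹ : ℝ) : ℂ) * Complex.exp (((2*Real.pi*j*g/n : ℝ) : ℂ) * Complex.I) := by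
    intro j g
    have h1 : (2 * (Real.pi:ℂ) * Complex.I * j * g / n : ℂ) = ((2*Real.pi*j*g/n : ℝ) : ℂ) * Complex.I := by
      push_cast; ring
    rw [h1, ← Complex.ofReal_natCast (min g (n-g)), ← Complex.ofReal_inv]
  have hre : ∀ j : ℕ, (lam j).re = ∑ g ∈ Finset.Icc 1 (n-1),
      ((min g (n-g) : ℕ) : ℝ)⁻¹ * Real.cos (2*Real.pi*j*g/n) := by
    intro j
    rw [hlam, Complex.re_sum]
    refine Finset.sum_congr rfl fun g _ => ?_
    rw [hterm j g, Complex.re_ofReal_mul, Complex.exp_ofReal_mul_I_re]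
  have him : ∀ j : ℕ, (lam j).im = ∑ g ∈ Finset.Icc 1 (n-1),
      ((min g (n-g) : ℕ) : ℝ)⁻¹ * Real.sin (2*Real.pi*j*g/n) := by
    intro j
    rw [hlam, Complex.im_sum]
    refine Finset.sum_congr rfl fun g _ => ?_
    rw [hterm j g, Complex.im_ofReal_mul, Complex.exp_ofReal_mul_I_im]
  constructor
  · -- imaginary part is zero
    intro j _
    rw [him]
    apply Finset.sum_involution (g := fun g _ => n - g)
    · -- f a + f (n-a) = 0
      intro g hg
      rw [Finset.mem_Icc] at hg
      have hgn : g ≤ n := by omega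
      have hmin : min (n-g) (n-(n-g)) = min g (n-g) := by
        rw [Nat.sub_sub_self hgn, min_comm]
      have harg : 2*Real.pi*(j:ℝ)*((n-g:ℕ):ℝ)/n = ((2*j:ℕ):ℝ)*Real.pi - 2*Real.pi*j*g/n := by
        rw [Nat.cast_sub hgn]
        push_cast
        field_simp
      rw [hmin, harg, Real.sin_nat_mul_pi_sub]
      have : (-1:ℝ)^(2*j) = 1 := Even.neg_one_pow (even_two_mul j)
      rw [this]
      ring
    · -- fixed points
      intro g hg hfne
      rw [Finset.mem_Icc] at hg
      intro heq
      apply hfne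
      have hgm : g = m := by omega
      have : 2*Real.pi*(j:ℝ)*(g:ℝ)/n = ((j:ℕ):ℝ)*Real.pi := by
        subst hgm
        field_simp [hnm]
        rw [hnm]; ring
      rw [this, Real.sin_nat_mul_pi, mul_zero]
    · intro g hg
      rw [Finset.mem_Icc] at hg ⊢
      omega
    · intro g hg
      rw [Finset.mem_Icc] at hg
      omega
  · -- the strict minimum
    intro j hjn hjm
    rw [hnd2]
    set j' := (j + m) % n with hj'
    have hj'lt : j' < n := Nat.mod_lt _ hn
    have hj'pos : 1 ≤ j' := by
      rcases lt_or_ge j m with h | h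
      · have : (j+m) % n = j + m := Nat.mod_eq_of_lt (by omega)
        omega
      · have : (j+m) % n = j + m - n := by
          rw [Nat.mod_eq_sub_mod (by omega), Nat.mod_eq_of_lt (by omega)]
        omega
    set x : ℝ := 2*Real.pi*(j':ℝ)/n with hx
    have hx0 : 0 < x := by
      rw [hx]
      have : (0:ℝ) < (j':ℝ) := by exact_mod_cast hj'pos
      have : (0:ℝ) < (n:ℝ) := by positivity
      positivity
    have hx2 : x < 2*Real.pi := by
      rw [hx, div_lt_iff₀ (by positivity : (0:ℝ) < (n:ℝ))]
      have hj'r : (j':ℝ) < (n:ℝ) := by exact_mod_cast hj'lt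
      nlinarith [Real.pi_pos]
    -- cos identities
    have hcosj : ∀ g : ℕ, Real.cos (2*Real.pi*(j:ℝ)*g/n) = (-1:ℝ)^g * Real.cos ((g:ℝ)*x) := by
      intro g
      set q := (j + m) / n with hq
      have hqe : n*q + j' = j + m := by rw [hq, hj']; exact Nat.div_add_mod (j+m) n
      have hjr : (j:ℝ) = (n:ℝ)*q + j' - m := by
        have : ((n*q + j' : ℕ):ℝ) = ((j + m : ℕ):ℝ) := by exact_mod_cast congrArg (Nat.cast (R:=ℝ)) hqe
        push_cast at this
        linarith
      have harg : 2*Real.pi*(j:ℝ)*g/n = ((g:ℝ)*x - (g:ℝ)*Real.pi) + ((q*g:ℕ):ℝ)*(2*Real.pi) := by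
        rw [hjr, hx]
        push_cast
        field_simp
        ring_nf
        linear_combination (g:ℝ) * hnm
      rw [harg, Real.cos_add_nat_mul_two_pi]
      rw [show (g:ℝ)*x - (g:ℝ)*Real.pi = -(((g:ℕ):ℝ)*Real.pi - (g:ℝ)*x) by ring]
      rw [Real.cos_neg, Real.cos_nat_mul_pi_sub]
    have hcosm : ∀ g : ℕ, Real.cos (2*Real.pi*(m:ℝ)*g/n) = (-1:ℝ)^g := by
      intro g
      have harg : 2*Real.pi*(m:ℝ)*g/n = ((g:ℕ):ℝ)*Real.pi - 0 := by
        field_simp [hnm]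
        rw [hnm]; ring
      rw [harg, Real.cos_nat_mul_pi_sub, Real.cos_zero, mul_one]
    -- the key sum identity
    have key : ∑ g ∈ Finset.Icc 1 (n-1),
        (-(-1:ℝ)^g) * (((min g (n-g) : ℕ) : ℝ)⁻¹ * (1 - Real.cos ((g:ℝ)*x))) = 2 * Pt m x := by
      have hsym : ∀ h : ℕ, h ≤ n → Real.cos (((n-h:ℕ):ℝ)*x) = Real.cos ((h:ℝ)*x) := by
        intro h hh
        have harg : ((n-h:ℕ):ℝ)*x = (j':ℝ)*(2*Real.pi) - (h:ℝ)*x := by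
          rw [Nat.cast_sub hh, hx]
          field_simp
        rw [harg, Real.cos_nat_mul_two_pi_sub]
      exact key_sum n m hn2 hm1 x hsym
    have hdiff : (lam j).re - (lam m).re = 2 * Pt m x := by
      rw [hre, hre, ← Finset.sum_sub_distrib, ← key]
      refine Finset.sum_congr rfl fun g hg => ?_
      rw [hcosj g, hcosm g]
      ring
    have := Pt_pos' m hm1 hx0 hx2
    linarith
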